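/- Let φ(t) = t³(t−1) and ψ(t) = 2t^{−2} + t^{−3}. Then the map ξ = (φ, ψ) : ℂ* → ℂ² is injective and ξ'(t) ≠ 0 for all t ∈ ℂ*, i.e. ξ is a smooth embedding of ℂ* into ℂ². -/

import Mathlib

/-- First coordinate of the seed of series (i): `φ(t) = t³(t−1)`. -/
noncomputable def phiI : ℂ → ℂ := fun t => t ^ 3 * (t - 1)

/-- Second coordinate: `ψ(t) = 2t⁻² + t⁻³`. -/
noncomputable def psiI : ℂ → ℂ := fun t => 2 * t ^ (-2 : ℤ) + t ^ (-3 : ℤ)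

lemma phiI_deriv (t : ℂ) : deriv phiI t = 3 * t ^ 2 * (t - 1) + t ^ 3 := by
  have h : HasDerivAt phiI (3 * t ^ 2 * (t - 1) + t ^ 3 * 1) t := by
    have h1 : HasDerivAt (fun t : ℂ => t ^ 3) ((3 : ℕ) * t ^ 2) t := by
      simpa using hasDerivAt_pow 3 t
    have h2 : HasDerivAt (fun t : ℂ => t - 1) 1 t := (hasDerivAt_id t).sub_const 1
    have h3 := h1.mul h2
    simp only [Nat.cast_ofNat, mul_one] at h3 ⊢
    exact h3
  simpa using h.deriv

lemma psiI_deriv {t : ℂ} (ht : t ≠ 0) :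
    deriv psiI t = 2 * ((-2 : ℤ) * t ^ (-3 : ℤ)) + (-3 : ℤ) * t ^ (-4 : ℤ) := by
  have h1 : HasDerivAt (fun t : ℂ => t ^ (-2 : ℤ)) ((-2 : ℤ) * t ^ ((-2 : ℤ) - 1)) t :=
    hasDerivAt_zpow (-2) t (Or.inl ht)
  have h2 : HasDerivAt (fun t : ℂ => t ^ (-3 : ℤ)) ((-3 : ℤ) * t ^ ((-3 : ℤ) - 1)) t :=
    hasDerivAt_zpow (-3) t (Or.inl ht)
  have h : HasDerivAt psiI (2 * ((-2 : ℤ) * t ^ ((-2 : ℤ) - 1)) + (-3 : ℤ) * t ^ ((-3 : ℤ) - 1)) t :=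
    (h1.const_mul 2).add h2
  rw [h.deriv]
  norm_num

/-- The map `ξ(t) = (t³(t−1), 2t⁻² + t⁻³)` is injective on `ℂ*` and has
nonvanishing derivative there, i.e. it is a smooth embedding of `ℂ*` into `ℂ²`. -/
theorem series_i_seed_smooth_embedding :
    Set.InjOn (fun t : ℂ => (phiI t, psiI t)) {t : ℂ | t ≠ 0} ∧
    ∀ t : ℂ, t ≠ 0 → ¬(deriv phiI t = 0 ∧ deriv psiI t = 0) := by
  constructor
  · intro a ha b hb hab
    simp only [Set.mem_setOf_eq] at ha hb
    simp only [Prod.mk.injEq, phiI, psiI] at hab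
    obtain ⟨h1, h2⟩ := hab
    -- turn h2 into a polynomial identity
    rw [show ((-2 : ℤ)) = -(2 : ℕ) by norm_num, show ((-3 : ℤ)) = -(3 : ℕ) by norm_num] at h2
    simp only [zpow_neg, zpow_natCast] at h2
    have h2' : (2 * a + 1) * b ^ 3 = (2 * b + 1) * a ^ 3 := by
      field_simp at h2
      have h3 : a ^ 2 * b ^ 2 * ((2 * a + 1) * b ^ 3) = a ^ 2 * b ^ 2 * ((2 * b + 1) * a ^ 3) := by
        linear_combination a ^ 2 * b ^ 2 * h2
      exact mul_left_cancel₀ (mul_ne_zero (pow_ne_zero _ ha) (pow_ne_zero _ hb)) h3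
    by_contra hne
    have hab' : a - b ≠ 0 := sub_ne_zero.mpr hne
    have key : (a - b) * (a + b) ^ 3 = 0 := by
      linear_combination h1 - h2'
    have hsum : (a + b) ^ 3 = 0 := by
      rcases mul_eq_zero.mp key with h | h
      · exact absurd h hab'
      · exact h
    have hba : b = -a := by
      have := pow_eq_zero_iff (n := 3) (by norm_num) |>.mp hsum
      linear_combination this
    subst hba
    have : a ^ 3 = 0 := by linear_combination (-(1 : ℂ)/2) * h1
    exact ha (pow_eq_zero_iff (n := 3) (by norm_num) |>.mp this)
  · rintro t ht ⟨hphi, hpsi⟩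
    rw [phiI_deriv] at hphi
    rw [psiI_deriv ht] at hpsi
    rw [show ((-3 : ℤ)) = -(3 : ℕ) by norm_num, show ((-4 : ℤ)) = -(4 : ℕ) by norm_num] at hpsi
    simp only [zpow_neg, zpow_natCast] at hpsi
    have hpsi' : (4 : ℂ) * t + 3 = 0 := by
      field_simp at hpsi
      have h3 : t ^ 3 * ((4 : ℂ) * t + 3) = t ^ 3 * 0 := by
        push_cast at hpsi
        linear_combination -t ^ 3 * hpsi
      exact mul_left_cancel₀ (pow_ne_zero _ ht) h3
    have ht' : t = -3/4 := by linear_combination (1/4 : ℂ) * hpsi'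
    rw [ht'] at hphi
    norm_num at hphi
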